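/- Cremer's theorem: if α ∈ ℝ∖ℚ satisfies limsup_{n→∞} |{nα}|^{-1/n} = +∞ (where {x} denotes the fractional part), then there exists a germ of a holomorphic diffeomorphism f of (ℂ,0) with f'(0) = e^{2πiα} which is not linearizable; indeed there exists f whose formal linearization has coefficients ĥ_n satisfying limsup_n |ĥ_n|^{1/n} = +∞. -/

import Mathlib

open Finset Filter

noncomputable section
namespace CremerAux

/-- The inner sum in the linearization recursion. -/
def T (x : ℕ → ℂ) (j n : ℕ) : ℂ :=
  ∑ t ∈ (Finset.Nat.antidiagonalTuple j n).filter (fun t => ∀ i, 0 < t i), ∏ i, x (t i)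

lemma lt_of_mem_tuple {j n : ℕ} (hj : 2 ≤ j) {t : Fin j → ℕ}
    (ht : ∑ i, t i = n) (hpos : ∀ i, 0 < t i) (i : Fin j) : t i < n := by
  have h0 : (0 : ℕ) < j := by omega
  have h1 : (1 : ℕ) < j := by omega
  obtain ⟨i', hi'⟩ : ∃ i' : Fin j, i' ≠ i := by
    rcases eq_or_ne i ⟨0, h0⟩ with rfl | hne
    · exact ⟨⟨1, h1⟩, by simp [Fin.ext_iff]⟩
    · exact ⟨⟨0, h0⟩, fun h => hne h.symm⟩
  calc t i < ∑ k, t k :=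
        Finset.single_lt_sum hi' (Finset.mem_univ i) (Finset.mem_univ i') (hpos i')
          (fun k _ _ => Nat.zero_le _)
    _ = n := ht

lemma T_congr {x y : ℕ → ℂ} {j n : ℕ} (hj : 2 ≤ j)
    (hxy : ∀ m, 0 < m → m < n → x m = y m) : T x j n = T y j n := by
  refine Finset.sum_congr rfl fun t ht => ?_
  rw [Finset.mem_filter, Finset.Nat.mem_antidiagonalTuple] at ht
  exact Finset.prod_congr rfl fun i _ =>
    hxy _ (ht.2 i) (lt_of_mem_tuple hj ht.1 ht.2 i)

lemma T_one {x : ℕ → ℂ} {n : ℕ} (hn : 1 ≤ n) : T x 1 n = x n := by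
  rw [T, Finset.Nat.antidiagonalTuple_one]
  rw [Finset.filter_singleton, if_pos (fun i => by simpa using (show 0 < n from hn))]
  simp

lemma T_self {x : ℕ → ℂ} {n : ℕ} (_hn : 1 ≤ n) : T x n n = x 1 ^ n := by
  have : (Finset.Nat.antidiagonalTuple n n).filter (fun t => ∀ i, 0 < t i)
      = {fun _ => 1} := by
    ext t
    simp only [Finset.mem_filter, Finset.Nat.mem_antidiagonalTuple, Finset.mem_singleton]
    constructor
    · rintro ⟨hsum, hpos⟩
      funext i
      by_contra hne
      have h2 : 2 ≤ t i := by have := hpos i; omega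
      have : ∑ k, t k > n := by
        calc n = ∑ _k : Fin n, 1 := by simp
        _ < ∑ k, t k := by
            apply Finset.sum_lt_sum
            · intro k _; exact hpos k
            · exact ⟨i, Finset.mem_univ i, by omega⟩
      omega
    · rintro rfl
      exact ⟨by simp, fun i => Nat.one_pos⟩
  rw [T, this]
  simp

def step (lam : ℂ) (n : ℕ) (prev : ℕ → ℂ × ℂ) : ℂ × ℂ :=
  if n = 0 then (0, 0)
  else if n = 1 then (lam, 1)
  else
    let R : ℂ := ∑ j ∈ Finset.Ioo 1 n, (prev j).1 * T (fun m => (prev m).2) j n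
    let c : ℂ := if R = 0 then 1 else R / (‖R‖ : ℂ)
    (c, (R + c) / (lam ^ n - lam))

lemma step_congr {lam : ℂ} {n : ℕ} {prev prev' : ℕ → ℂ × ℂ}
    (h : ∀ m, m < n → prev m = prev' m) : step lam n prev = step lam n prev' := by
  unfold step
  rcases eq_or_ne n 0 with rfl | h0
  · simp
  rcases eq_or_ne n 1 with rfl | h1
  · simp
  have hR : ∑ j ∈ Finset.Ioo 1 n, (prev j).1 * T (fun m => (prev m).2) j n
      = ∑ j ∈ Finset.Ioo 1 n, (prev' j).1 * T (fun m => (prev' m).2) j n := by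
    refine Finset.sum_congr rfl fun j hj => ?_
    rw [Finset.mem_Ioo] at hj
    rw [h j hj.2, T_congr hj.1 (fun m _ hm => by rw [h m hm])]
  simp only [if_neg h0, if_neg h1, hR]

def seq (lam : ℂ) : ℕ → ℂ × ℂ
  | n => step lam n (fun m => if h : m < n then seq lam m else 0)
  termination_by n => n

lemma seq_eq (lam : ℂ) (n : ℕ) : seq lam n = step lam n (seq lam) := by
  rw [seq]
  exact step_congr (fun m hm => by simp [hm])

lemma seq_zero (lam : ℂ) : seq lam 0 = (0, 0) := by rw [seq_eq]; simp [step]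
lemma seq_one (lam : ℂ) : seq lam 1 = (lam, 1) := by rw [seq_eq]; simp [step]

/-- R value -/
def Rv (lam : ℂ) (n : ℕ) : ℂ :=
  ∑ j ∈ Finset.Ioo 1 n, (seq lam j).1 * T (fun m => (seq lam m).2) j n

def cv (lam : ℂ) (n : ℕ) : ℂ := if Rv lam n = 0 then 1 else Rv lam n / (‖Rv lam n‖ : ℂ)

lemma seq_of_two_le (lam : ℂ) {n : ℕ} (hn : 2 ≤ n) :
    seq lam n = (cv lam n, (Rv lam n + cv lam n) / (lam ^ n - lam)) := by
  rw [seq_eq]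
  unfold step
  rw [if_neg (by omega), if_neg (by omega)]
  rfl

lemma norm_Rc_ge (lam : ℂ) (n : ℕ) : 1 ≤ ‖Rv lam n + cv lam n‖ := by
  unfold cv
  rcases eq_or_ne (Rv lam n) 0 with h | h
  · simp [h]
  · rw [if_neg h]
    set R := Rv lam n
    have hR : (0:ℝ) < ‖R‖ := norm_pos_iff.2 h
    have : R + R / (‖R‖ : ℂ) = R * ((1 + ‖R‖⁻¹ : ℝ) : ℂ) := by
      have : ((‖R‖ : ℂ)) ≠ 0 := by
        exact_mod_cast ne_of_gt hR
      push_cast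
      ring
    rw [this, norm_mul, Complex.norm_real, Real.norm_eq_abs,
      abs_of_pos (by positivity)]
    have : ‖R‖ * (1 + ‖R‖⁻¹) = ‖R‖ + 1 := by
      rw [mul_add, mul_one, mul_inv_cancel₀ (ne_of_gt hR)]
    rw [this]
    linarith

lemma norm_cv_le (lam : ℂ) (n : ℕ) : ‖cv lam n‖ ≤ 1 := by
  unfold cv
  rcases eq_or_ne (Rv lam n) 0 with h | h
  · simp [h]
  · rw [if_neg h, norm_div, Complex.norm_real, Real.norm_eq_abs,
      abs_of_pos (norm_pos_iff.2 h)]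
    rw [div_self (ne_of_gt (norm_pos_iff.2 h))]

def cval (lam : ℂ) (n : ℕ) : ℂ := (seq lam n).1
def hval (lam : ℂ) (n : ℕ) : ℂ := (seq lam n).2

lemma cval_zero (lam : ℂ) : cval lam 0 = 0 := by rw [cval, seq_zero]
lemma cval_one (lam : ℂ) : cval lam 1 = lam := by rw [cval, seq_one]
lemma hval_zero (lam : ℂ) : hval lam 0 = 0 := by rw [hval, seq_zero]
lemma hval_one (lam : ℂ) : hval lam 1 = 1 := by rw [hval, seq_one]
lemma cval_of_two_le (lam : ℂ) {n : ℕ} (hn : 2 ≤ n) : cval lam n = cv lam n := by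
  rw [cval, seq_of_two_le lam hn]
lemma hval_of_two_le (lam : ℂ) {n : ℕ} (hn : 2 ≤ n) :
    hval lam n = (Rv lam n + cv lam n) / (lam ^ n - lam) := by
  rw [hval, seq_of_two_le lam hn]
lemma norm_cval_le (lam : ℂ) (hlam : ‖lam‖ = 1) (n : ℕ) : ‖cval lam n‖ ≤ 1 := by
  match n with
  | 0 => rw [cval_zero]; simp
  | 1 => rw [cval_one, hlam]
  | (m+2) => rw [cval_of_two_le lam (by omega)]; exact norm_cv_le lam _

lemma Rv_eq (lam : ℂ) (n : ℕ) :
    Rv lam n = ∑ j ∈ Finset.Ioo 1 n, cval lam j * T (hval lam) j n := rfl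

lemma Icc_split {n : ℕ} (hn : 2 ≤ n) :
    Finset.Icc 1 n = insert 1 (insert n (Finset.Ioo 1 n)) := by
  ext x
  simp only [Finset.mem_Icc, Finset.mem_insert, Finset.mem_Ioo]
  omega

lemma not_mem_one {n : ℕ} (hn : 2 ≤ n) : (1:ℕ) ∉ insert n (Finset.Ioo 1 n) := by
  simp only [Finset.mem_insert, Finset.mem_Ioo]; omega

lemma not_mem_n {n : ℕ} : n ∉ Finset.Ioo 1 n := by
  simp only [Finset.mem_Ioo]; omega

lemma recursion (lam : ℂ) {n : ℕ} (hn : 1 ≤ n)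
    (hne : ∀ m : ℕ, 2 ≤ m → lam ^ m ≠ lam) :
    lam ^ n * hval lam n = ∑ j ∈ Finset.Icc 1 n, cval lam j * T (hval lam) j n := by
  rcases eq_or_lt_of_le hn with h1 | h2
  · subst h1
    simp [T_one le_rfl, hval_one, cval_one]
  · have hn2 : 2 ≤ n := h2
    rw [Icc_split hn2, Finset.sum_insert, Finset.sum_insert]
    · rw [T_one hn, T_self hn, hval_one, one_pow, mul_one, cval_one, ← Rv_eq,
        cval_of_two_le lam hn2]
      have hd : lam ^ n - lam ≠ 0 := sub_ne_zero.2 (hne n hn2)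
      rw [hval_of_two_le lam hn2]
      field_simp
      ring
    · exact not_mem_n
    · exact not_mem_one hn2

lemma unique (lam : ℂ) (x : ℕ → ℂ) (hx0 : x 0 = 0) (hx1 : x 1 = 1)
    (hrec : ∀ n : ℕ, 1 ≤ n →
      lam ^ n * x n = ∑ j ∈ Finset.Icc 1 n, cval lam j * T x j n)
    (hne : ∀ m : ℕ, 2 ≤ m → lam ^ m ≠ lam) :
    ∀ n, x n = hval lam n := by
  intro n
  induction n using Nat.strong_induction_on with
  | _ n ih =>
    match n, ih with
    | 0, _ => rw [hx0, hval_zero]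
    | 1, _ => rw [hx1, hval_one]
    | (m+2), ih =>
      set n := m + 2 with hn
      have hn1 : 1 ≤ n := by omega
      have hn2 : 2 ≤ n := by omega
      have e1 := hrec n hn1
      have e2 := recursion lam hn1 hne
      have hsum : ∑ j ∈ Finset.Icc 1 n, cval lam j * T x j n
          = cval lam 1 * x n + ∑ j ∈ insert n (Finset.Ioo 1 n),
              cval lam j * T (hval lam) j n := by
        rw [Icc_split hn2, Finset.sum_insert (not_mem_one hn2), T_one hn1]
        congr 1
        refine Finset.sum_congr rfl fun j hj => ?_
        have hj2 : 2 ≤ j := by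
          simp only [Finset.mem_insert, Finset.mem_Ioo] at hj
          omega
        rw [T_congr hj2 (fun p hp hpn => ih p hpn)]
      have hsum2 : ∑ j ∈ Finset.Icc 1 n, cval lam j * T (hval lam) j n
          = cval lam 1 * hval lam n + ∑ j ∈ insert n (Finset.Ioo 1 n),
              cval lam j * T (hval lam) j n := by
        rw [Icc_split hn2, Finset.sum_insert (not_mem_one hn2), T_one hn1]
      rw [hsum] at e1
      rw [hsum2] at e2
      rw [cval_one] at e1 e2
      have key : (lam ^ n - lam) * (x n - hval lam n) = 0 := by
        linear_combination e1 - e2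
      rcases mul_eq_zero.1 key with h | h
      · exact absurd (sub_eq_zero.1 h) (hne n hn2)
      · exact sub_eq_zero.1 h

lemma hval_norm (lam : ℂ) {n : ℕ} (hn : 2 ≤ n) :
    1 / ‖lam ^ n - lam‖ ≤ ‖hval lam n‖ := by
  rw [hval_of_two_le lam hn, norm_div]
  rcases eq_or_ne (lam ^ n - lam) 0 with h | h
  · simp [h]
  · gcongr
    exact norm_Rc_ge lam n

def sigmaSet (n : ℕ) : Finset (Σ j : ℕ, Fin j → ℕ) :=
  (Finset.Icc 1 n).sigma
    (fun j => (Finset.Nat.antidiagonalTuple j n).filter (fun t => ∀ i, 0 < t i))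

def toComposition (n : ℕ) (s : Σ j : ℕ, Fin j → ℕ) (hs : s ∈ sigmaSet n) :
    Composition n where
  blocks := List.ofFn s.2
  blocks_pos := by
    intro i hi
    rw [List.mem_ofFn] at hi
    obtain ⟨k, rfl⟩ := hi
    have := (Finset.mem_filter.1 (Finset.mem_sigma.1 hs).2).2
    exact this k
  blocks_sum := by
    rw [List.sum_ofFn]
    exact Finset.Nat.mem_antidiagonalTuple.1
      (Finset.mem_filter.1 (Finset.mem_sigma.1 hs).2).1

lemma comp_coeff (p q : FormalMultilinearSeries ℂ ℂ ℂ) {n : ℕ} (hn : 1 ≤ n) :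
    (p.comp q).coeff n = ∑ j ∈ Finset.Icc 1 n, p.coeff j * T q.coeff j n := by
  have step1 : (p.comp q).coeff n
      = ∑ c : Composition n, (∏ i, q.coeff (c.blocksFun i)) * p.coeff c.length := by
    rw [FormalMultilinearSeries.coeff]
    show (∑ c : Composition n, p.compAlongComposition q c) 1 = _
    rw [ContinuousMultilinearMap.sum_apply]
    refine Finset.sum_congr rfl fun c _ => ?_
    rw [FormalMultilinearSeries.compAlongComposition_apply]
    have happ : q.applyComposition c 1 = fun i => q.coeff (c.blocksFun i) := by
      funext i; rfl
    rw [happ, FormalMultilinearSeries.apply_eq_prod_smul_coeff, smul_eq_mul]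
  rw [step1]
  simp only [T, Finset.mul_sum]
  rw [Finset.sum_sigma']
  refine Finset.sum_bij'
    (fun (c : Composition n) (_ : c ∈ Finset.univ) =>
      (⟨c.length, c.blocksFun⟩ : Σ j : ℕ, Fin j → ℕ))
    (fun s hs => toComposition n s hs) ?_ ?_ ?_ ?_ ?_
  · intro c _
    rw [show ((Finset.Icc 1 n).sigma
      (fun j => (Finset.Nat.antidiagonalTuple j n).filter (fun t => ∀ i, 0 < t i)))
      = sigmaSet n from rfl]
    rw [sigmaSet, Finset.mem_sigma]
    constructor
    · rw [Finset.mem_Icc]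
      exact ⟨c.length_pos_of_pos hn, c.length_le⟩
    · rw [Finset.mem_filter, Finset.Nat.mem_antidiagonalTuple]
      exact ⟨c.sum_blocksFun, c.one_le_blocksFun⟩
  · intro s hs
    exact Finset.mem_univ _
  · intro c hc
    apply Composition.ext
    simp [toComposition, Composition.blocksFun, List.ofFn_get]
  · intro s hs
    refine Sigma.ext ?_ ?_
    · simp [toComposition, Composition.length]
    · rw [Fin.heq_fun_iff (by simp [toComposition, Composition.length])]
      intro i
      simp [toComposition, Composition.blocksFun, List.get_ofFn]
      exact List.get_ofFn _ _
  · intro c _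
    exact mul_comm _ _

variable {α : ℝ}

lemma norm_lam (α : ℝ) : ‖Complex.exp (2 * Real.pi * Complex.I * α)‖ = 1 := by
  rw [Complex.norm_exp]
  norm_num [Complex.mul_re, Complex.mul_im]

lemma lam_pow (α : ℝ) (m : ℕ) :
    Complex.exp (2 * Real.pi * Complex.I * α) ^ m
      = Complex.exp (2 * Real.pi * Complex.I * (m * α)) := by
  rw [← Complex.exp_nat_mul]
  ring_nf

lemma lam_pow_ne_one (hα : Irrational α) {m : ℕ} (hm : 1 ≤ m) :
    Complex.exp (2 * Real.pi * Complex.I * α) ^ m ≠ 1 := by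
  rw [lam_pow]
  intro h
  rw [Complex.exp_eq_one_iff] at h
  obtain ⟨k, hk⟩ := h
  have h2 : (2 * Real.pi * Complex.I) * ((m:ℂ) * (α:ℂ)) = (2 * Real.pi * Complex.I) * k := by
    linear_combination hk
  have hne : (2 * (Real.pi:ℂ) * Complex.I) ≠ 0 := by
    simpa [mul_comm] using Complex.two_pi_I_ne_zero
  have h3 : ((m:ℂ) * (α:ℂ)) = (k:ℂ) := mul_left_cancel₀ (by exact_mod_cast hne) h2
  have h4 : (m:ℝ) * α = (k:ℝ) := by exact_mod_cast h3
  have hm0 : (m:ℝ) ≠ 0 := Nat.cast_ne_zero.2 (by omega)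
  apply hα
  refine ⟨(k : ℚ) / (m : ℚ), ?_⟩
  push_cast
  field_simp
  linarith [h4]

lemma lam_pow_ne_lam (hα : Irrational α) {m : ℕ} (hm : 2 ≤ m) :
    Complex.exp (2 * Real.pi * Complex.I * α) ^ m
      ≠ Complex.exp (2 * Real.pi * Complex.I * α) := by
  set lam := Complex.exp (2 * Real.pi * Complex.I * α) with hl
  intro h
  have hlne : lam ≠ 0 := Complex.exp_ne_zero _
  have : lam ^ (m - 1) * lam = 1 * lam := by
    rw [one_mul, ← pow_succ]
    have : m - 1 + 1 = m := by omega
    rw [this, h]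
  have h1 : lam ^ (m-1) = 1 := mul_right_cancel₀ hlne this
  exact lam_pow_ne_one hα (by omega) h1

lemma fract_pos (hα : Irrational α) {m : ℕ} (hm : 1 ≤ m) :
    0 < Int.fract ((m:ℝ) * α) := by
  have hirr : Irrational ((m:ℝ) * α) := by
    exact hα.natCast_mul (by omega)
  rw [Int.fract_pos]
  intro h
  exact hirr.ne_int ⌊(m:ℝ)*α⌋ h

lemma norm_lam_pow_sub_one_le (hα : Irrational α) {m : ℕ} (hm : 1 ≤ m)
    (hsmall : 2 * Real.pi * Int.fract ((m:ℝ) * α) ≤ 1) :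
    ‖Complex.exp (2 * Real.pi * Complex.I * α) ^ m - 1‖
      ≤ 4 * Real.pi * Int.fract ((m:ℝ) * α) := by
  rw [lam_pow]
  set x : ℝ := (m:ℝ) * α with hx
  have hxc : Complex.exp (2 * Real.pi * Complex.I * ((m:ℂ) * (α:ℂ)))
      = Complex.exp (2 * Real.pi * Complex.I * ((x:ℝ):ℂ)) := by
    congr 1
    rw [Complex.ofReal_mul, Complex.ofReal_natCast]
  have hre : (x : ℝ) = (⌊x⌋ : ℝ) + Int.fract x := (Int.floor_add_fract x).symm
  have harg1 : (2 * Real.pi * Complex.I * ((x:ℝ):ℂ))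
      = (⌊x⌋ : ℂ) * (2 * Real.pi * Complex.I)
        + 2 * Real.pi * Complex.I * ((Int.fract x : ℝ):ℂ) := by
    calc (2 * Real.pi * Complex.I * ((x:ℝ):ℂ))
        = 2 * Real.pi * Complex.I * ((((⌊x⌋ : ℝ) + Int.fract x : ℝ)):ℂ) := by rw [← hre]
      _ = _ := by push_cast; ring
  have hsplit : Complex.exp (2 * Real.pi * Complex.I * ((m:ℂ) * (α:ℂ)))
      = Complex.exp (2 * Real.pi * Complex.I * ((Int.fract x : ℝ):ℂ)) := by
    rw [hxc, harg1, Complex.exp_add, Complex.exp_int_mul_two_pi_mul_I, one_mul]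
  rw [hsplit]
  set s : ℝ := Int.fract x with hs
  have hs0 : 0 ≤ s := Int.fract_nonneg x
  have harg : (2 * Real.pi * Complex.I * (s:ℝ)) = ((2 * Real.pi * s : ℝ) : ℂ) * Complex.I := by
    push_cast; ring
  rw [harg]
  have habs : ‖((2 * Real.pi * s : ℝ) : ℂ) * Complex.I‖ = 2 * Real.pi * s := by
    rw [norm_mul, Complex.norm_I, Complex.norm_real, Real.norm_eq_abs, mul_one,
      abs_of_nonneg (by positivity)]
  have hle := Complex.norm_exp_sub_one_le (x := ((2 * Real.pi * s : ℝ) : ℂ) * Complex.I)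
    (by rw [habs]; exact hsmall)
  rw [habs] at hle
  calc ‖Complex.exp (((2 * Real.pi * s : ℝ) : ℂ) * Complex.I) - 1‖
      = ‖Complex.exp (((2 * Real.pi * s : ℝ) : ℂ) * Complex.I) - 1‖ := rfl
    _ ≤ 2 * (2 * Real.pi * s) := hle
    _ = 4 * Real.pi * s := by ring

lemma growth (α : ℝ) (hα : Irrational α)
    (hcremer : ∀ C : ℝ, ∃ᶠ n : ℕ in atTop,
      C < Int.fract ((n : ℝ) * α) ^ (-(1 : ℝ) / (n : ℝ)))
    (M : ℝ) :
    ∃ᶠ n : ℕ in atTop,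
      M < ‖hval (Complex.exp (2 * Real.pi * Complex.I * α)) n‖ ^ ((1 : ℝ) / (n : ℝ)) := by
  set lam := Complex.exp (2 * Real.pi * Complex.I * α) with hlam
  set Mx := max M 1 with hMx
  have hMx1 : (1:ℝ) ≤ Mx := le_max_right M 1
  set K := Mx ^ 2 with hK
  have hK1 : (1:ℝ) ≤ K := one_le_pow₀ hMx1
  set C := 4 * Real.pi * K with hC
  have hpi : (1:ℝ) ≤ 4 * Real.pi := by nlinarith [Real.pi_gt_three]
  have hC1 : (1:ℝ) ≤ C := by nlinarith [Real.pi_gt_three]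
  have hCpos : (0:ℝ) < C := by linarith
  rw [frequently_atTop]
  intro a
  obtain ⟨m, hm⟩ := ((hcremer C).and_eventually (eventually_ge_atTop (max a 1))).exists
  obtain ⟨hCs, hma⟩ := hm
  have hm1 : 1 ≤ m := le_trans (le_max_right a 1) hma
  have hm0 : (m:ℝ) ≠ 0 := Nat.cast_ne_zero.2 (by omega)
  set s := Int.fract ((m:ℝ) * α) with hsdef
  have hs0 : 0 < s := fract_pos hα hm1
  -- C ^ m < s⁻¹
  have hpow : (s ^ ((-1:ℝ)/(m:ℝ))) ^ m = s⁻¹ := by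
    rw [← Real.rpow_natCast (s ^ ((-1:ℝ)/(m:ℝ))) m, ← Real.rpow_mul hs0.le]
    rw [div_mul_cancel₀ _ hm0, Real.rpow_neg_one]
  have h1 : C ^ m < s⁻¹ := by
    calc C ^ m < (s ^ ((-1:ℝ)/(m:ℝ))) ^ m := by
          apply pow_lt_pow_left₀ hCs hCpos.le (by omega)
      _ = s⁻¹ := hpow
  have h1' : C ^ m * s < 1 := by
    rw [inv_eq_one_div, lt_div_iff₀ hs0] at h1
    exact h1
  have hCmge : C ≤ C ^ m := le_self_pow₀ hC1 (by omega)
  have h4pis : 4 * Real.pi * s < 1 := by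
    have : 4 * Real.pi * s ≤ C ^ m * s := by
      apply mul_le_mul_of_nonneg_right _ hs0.le
      calc 4 * Real.pi ≤ C := by nlinarith
        _ ≤ C ^ m := hCmge
    linarith
  have hsmall : 2 * Real.pi * s ≤ 1 := by nlinarith [Real.pi_pos, hs0]
  -- norm bounds
  set n := m + 1 with hn
  have hn2 : 2 ≤ n := by omega
  have hnormle : ‖lam ^ m - 1‖ ≤ 4 * Real.pi * s := norm_lam_pow_sub_one_le hα hm1 hsmall
  have hposn : 0 < ‖lam ^ m - 1‖ := by
    rw [norm_pos_iff, sub_ne_zero]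
    exact lam_pow_ne_one hα hm1
  have hfac : ‖lam ^ n - lam‖ = ‖lam ^ m - 1‖ := by
    have : lam ^ n - lam = (lam ^ m - 1) * lam := by rw [pow_succ]; ring
    rw [this, norm_mul, norm_lam, mul_one]
  have hlow : 1 / ‖lam ^ n - lam‖ ≤ ‖hval lam n‖ := hval_norm lam hn2
  have hchain : Mx ^ n < ‖hval lam n‖ := by
    have e1 : Mx ^ n ≤ K ^ m := by
      calc Mx ^ n ≤ Mx ^ (2 * m) := pow_le_pow_right₀ hMx1 (by omega)
        _ = K ^ m := by rw [hK, ← pow_mul]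
    have e2 : K ^ m ≤ C ^ m / (4 * Real.pi) := by
      rw [le_div_iff₀ (by linarith)]
      calc K ^ m * (4 * Real.pi) = 4 * Real.pi * K ^ m := by ring
        _ ≤ (4 * Real.pi) ^ m * K ^ m := by
            apply mul_le_mul_of_nonneg_right (le_self_pow₀ hpi (by omega)) (by positivity)
        _ = C ^ m := by rw [hC]; ring
    have e3 : C ^ m / (4 * Real.pi) < 1 / (4 * Real.pi * s) := by
      rw [div_lt_div_iff₀ (by linarith) (by positivity)]
      calc C ^ m * (4 * Real.pi * s) = (C ^ m * s) * (4 * Real.pi) := by ring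
        _ < 1 * (4 * Real.pi) := by
            apply mul_lt_mul_of_pos_right h1' (by linarith)
        _ = 1 * (4 * Real.pi) := rfl
    have e4 : 1 / (4 * Real.pi * s) ≤ 1 / ‖lam ^ m - 1‖ :=
      one_div_le_one_div_of_le hposn hnormle
    calc Mx ^ n ≤ K ^ m := e1
      _ ≤ C ^ m / (4 * Real.pi) := e2
      _ < 1 / (4 * Real.pi * s) := e3
      _ ≤ 1 / ‖lam ^ m - 1‖ := e4
      _ = 1 / ‖lam ^ n - lam‖ := by rw [hfac]
      _ ≤ ‖hval lam n‖ := hlow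
  refine ⟨n, by omega, ?_⟩
  have hnR : (0:ℝ) < (n:ℝ) := by positivity
  have hfinal : Mx < ‖hval lam n‖ ^ ((1:ℝ)/(n:ℝ)) := by
    have hMxn : Mx = (Mx ^ n) ^ ((1:ℝ)/(n:ℝ)) := by
      rw [← Real.rpow_natCast Mx n, ← Real.rpow_mul (by linarith)]
      rw [mul_one_div, div_self (ne_of_gt hnR), Real.rpow_one]
    rw [hMxn]
    exact Real.rpow_lt_rpow (by positivity) hchain (by positivity)
  exact lt_of_le_of_lt (le_max_left M 1) hfinal

end CremerAux
end
/-- Cremer's theorem: if `limsup |{nα}|^{-1/n} = +∞`, there is a germ with linear part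
`e^{2πiα}` which is not linearizable; indeed its formal linearization `h` (given by the
usual recursion) has coefficients with `limsup ‖h_n‖^{1/n} = +∞`. -/
theorem stmt4 (α : ℝ) (hα : Irrational α)
    (hcremer : ∀ C : ℝ, ∃ᶠ n : ℕ in atTop,
      C < Int.fract ((n : ℝ) * α) ^ (-(1 : ℝ) / (n : ℝ))) :
    ∃ (f : ℂ → ℂ) (p : FormalMultilinearSeries ℂ ℂ ℂ) (h : ℕ → ℂ),
      HasFPowerSeriesAt f p 0 ∧ f 0 = 0 ∧
      deriv f 0 = Complex.exp (2 * Real.pi * Complex.I * α) ∧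
      (¬ ∃ g : ℂ → ℂ, AnalyticAt ℂ g 0 ∧ g 0 = 0 ∧ deriv g 0 = 1 ∧
          ∀ᶠ z in nhds (0 : ℂ),
            f (g z) = g (Complex.exp (2 * Real.pi * Complex.I * α) * z)) ∧
      h 0 = 0 ∧ h 1 = 1 ∧
      (∀ n : ℕ, 1 ≤ n →
        Complex.exp (2 * Real.pi * Complex.I * α) ^ n * h n =
          ∑ j ∈ Finset.Icc 1 n, p.coeff j *
            ∑ t ∈ (Finset.Nat.antidiagonalTuple j n).filter (fun t => ∀ i, 0 < t i),
              ∏ i, h (t i)) ∧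
      (∀ M : ℝ, ∃ᶠ n : ℕ in atTop, M < ‖h n‖ ^ ((1 : ℝ) / (n : ℝ))) := by
  classical
  set lam := Complex.exp (2 * Real.pi * Complex.I * α) with hlam
  have hne : ∀ m : ℕ, 2 ≤ m → lam ^ m ≠ lam := fun m hm => CremerAux.lam_pow_ne_lam hα hm
  set p : FormalMultilinearSeries ℂ ℂ ℂ :=
    fun n => ContinuousMultilinearMap.mkPiRing ℂ (Fin n) (CremerAux.cval lam n) with hp
  have hcoeff : ∀ n, p.coeff n = CremerAux.cval lam n := by
    intro n
    simp [hp, FormalMultilinearSeries.coeff, ContinuousMultilinearMap.mkPiRing_apply]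
  have hnorm : ∀ n, ‖p n‖ = ‖CremerAux.cval lam n‖ := fun n => by
    simp [hp, ContinuousMultilinearMap.norm_mkPiRing]
  have hrad : (1 : ENNReal) ≤ p.radius := by
    have := p.le_radius_of_bound 1 (r := 1) (fun n => by
      rw [hnorm n]
      simpa using CremerAux.norm_cval_le lam (CremerAux.norm_lam α) n)
    simpa using this
  have hradpos : (0 : ENNReal) < p.radius := lt_of_lt_of_le zero_lt_one hrad
  have hball := p.hasFPowerSeriesOnBall hradpos
  have hfa : HasFPowerSeriesAt p.sum p 0 := hball.hasFPowerSeriesAt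
  have hgrow := CremerAux.growth α hα hcremer
  have hf0 : p.sum 0 = 0 := by
    have h1 : p 0 (fun _ => 1) = p.sum 0 := hfa.coeff_zero _
    have h2 : p 0 (fun _ => 1) = p.coeff 0 := rfl
    rw [← h1, h2, hcoeff 0, CremerAux.cval_zero]
  refine ⟨p.sum, p, CremerAux.hval lam, hfa, hf0, ?_, ?_, CremerAux.hval_zero lam,
    CremerAux.hval_one lam, ?_, fun M => hgrow M⟩
  · -- derivative
    have := hfa.deriv
    rw [this]
    have h2 : (p 1 fun _ => 1) = p.coeff 1 := rfl
    rw [h2, hcoeff 1, CremerAux.cval_one]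
  · -- non-linearizability
    rintro ⟨g, hg, hg0, hg1, heqv⟩
    obtain ⟨q, hq⟩ := hg
    have hfg : HasFPowerSeriesAt p.sum p (g 0) := by rw [hg0]; exact hfa
    have hcomp : HasFPowerSeriesAt (p.sum ∘ g) (p.comp q) 0 := hfg.comp hq
    set r : FormalMultilinearSeries ℂ ℂ ℂ :=
      fun n => ContinuousMultilinearMap.mkPiRing ℂ (Fin n) (lam ^ n * q.coeff n) with hr
    have hrcoeff : ∀ n, r.coeff n = lam ^ n * q.coeff n := by
      intro n
      have e : r n = ContinuousMultilinearMap.mkPiRing ℂ (Fin n) (lam ^ n * q.coeff n) := by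
        rw [hr]
      show (r n) 1 = _
      rw [e, ContinuousMultilinearMap.mkPiRing_apply]
      simp
    have hgl : HasFPowerSeriesAt (fun z => g (lam * z)) r 0 := by
      rw [hasFPowerSeriesAt_iff] at hq ⊢
      have hcont : Filter.Tendsto (fun z : ℂ => lam * z) (nhds 0) (nhds 0) := by
        have hc : Continuous (fun z : ℂ => lam * z) := by continuity
        have := hc.tendsto (0 : ℂ)
        simpa using this
      filter_upwards [hcont.eventually hq] with z hz
      have hfun : (fun n => z ^ n • r.coeff n) = fun n => (lam * z) ^ n • q.coeff n := by
        funext k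
        rw [hrcoeff k]
        simp only [smul_eq_mul, mul_pow]
        ring
      rw [hfun]
      simpa using hz
    have heq2 : ∀ᶠ z in nhds (0 : ℂ), (p.sum ∘ g) z = (fun z => g (lam * z)) z := heqv
    have hpq : p.comp q = r := hcomp.eq_formalMultilinearSeries_of_eventually hgl heq2
    have hq0 : q.coeff 0 = 0 := by
      have h1 : q 0 (fun _ => 1) = g 0 := hq.coeff_zero _
      have h2 : q 0 (fun _ => 1) = q.coeff 0 := rfl
      rw [← h2, h1, hg0]
    have hq1 : q.coeff 1 = 1 := by
      have := hq.deriv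
      rw [hg1] at this
      exact this.symm
    have hqrec : ∀ n : ℕ, 1 ≤ n →
        lam ^ n * q.coeff n
          = ∑ j ∈ Finset.Icc 1 n, CremerAux.cval lam j * CremerAux.T q.coeff j n := by
      intro n hn
      have h1 := CremerAux.comp_coeff p q hn
      rw [hpq, hrcoeff n] at h1
      simp only [hcoeff] at h1
      exact h1
    have huniq : ∀ n, q.coeff n = CremerAux.hval lam n :=
      CremerAux.unique lam q.coeff hq0 hq1 hqrec hne
    -- growth contradiction
    obtain ⟨rr, hrr⟩ := hq
    have hrrad : (0 : ENNReal) < q.radius := lt_of_lt_of_le hrr.r_pos hrr.r_le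
    obtain ⟨r1, hr1a, hr1b⟩ := ENNReal.lt_iff_exists_nnreal_btwn.1 hrrad
    have hr1pos : (0:ℝ) < (r1:ℝ) := by
      have : (0 : ENNReal) < (r1 : ENNReal) := hr1a
      exact_mod_cast this
    obtain ⟨Cb, hCb0, hCb⟩ := q.norm_mul_pow_le_of_lt_radius hr1b
    set MM : ℝ := max Cb 1 / (r1:ℝ) with hMM
    have hMMpos : 0 < MM := by positivity
    obtain ⟨n, hn1, hngt⟩ := frequently_atTop.1 (hgrow MM) 1
    have hbound : ‖CremerAux.hval lam n‖ ≤ MM ^ n := by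
      have e0 : ‖CremerAux.hval lam n‖ = ‖q n‖ := by
        rw [← huniq n, FormalMultilinearSeries.norm_apply_eq_norm_coef]
      have e1 : ‖q n‖ ≤ Cb / (r1:ℝ) ^ n := by
        rw [le_div_iff₀ (by positivity)]
        exact hCb n
      have e2 : Cb / (r1:ℝ) ^ n ≤ (max Cb 1) ^ n / (r1:ℝ) ^ n := by
        apply div_le_div_of_nonneg_right ?_ (by positivity)
        calc Cb ≤ max Cb 1 := le_max_left _ _
          _ ≤ (max Cb 1) ^ n := le_self_pow₀ (le_max_right _ _) (by omega)
      calc ‖CremerAux.hval lam n‖ = ‖q n‖ := e0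
        _ ≤ Cb / (r1:ℝ) ^ n := e1
        _ ≤ (max Cb 1) ^ n / (r1:ℝ) ^ n := e2
        _ = MM ^ n := by rw [hMM, div_pow]
    have hle : ‖CremerAux.hval lam n‖ ^ ((1:ℝ)/(n:ℝ)) ≤ MM := by
      have hnR : (0:ℝ) < (n:ℝ) := by positivity
      have hMMn : (MM ^ n) ^ ((1:ℝ)/(n:ℝ)) = MM := by
        rw [← Real.rpow_natCast MM n, ← Real.rpow_mul hMMpos.le]
        rw [mul_one_div, div_self (ne_of_gt hnR), Real.rpow_one]
      calc ‖CremerAux.hval lam n‖ ^ ((1:ℝ)/(n:ℝ))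
          ≤ (MM ^ n) ^ ((1:ℝ)/(n:ℝ)) :=
            Real.rpow_le_rpow (norm_nonneg _) hbound (by positivity)
        _ = MM := hMMn
    exact absurd (lt_of_lt_of_le hngt hle) (lt_irrefl MM)
  · -- recursion
    intro n hn
    have hr := CremerAux.recursion lam hn hne
    calc lam ^ n * CremerAux.hval lam n
        = ∑ j ∈ Finset.Icc 1 n, CremerAux.cval lam j * CremerAux.T (CremerAux.hval lam) j n :=
          hr
      _ = _ := by
          refine Finset.sum_congr rfl fun j _ => ?_
          rw [hcoeff j]
          rfl
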